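/- Let d > 0, ν ≥ 0, β, γ > 0, τ > 0, and let S, I : [−τ,∞) → ℝ be continuous, C¹ on [0,∞), solving the delayed system S' = d(1−S) − βIS + I(t−τ)(γ + νβ(1−S(t−τ)−I(t−τ)))exp(−dτ − νβ∫_{t−τ}^t I(u)du), I' = βIS − (γ+d)I. Define A(t) = 1 − S(t) − I(t) − ∫_{t−τ}^{t}(γ + νβ(1−S(u)−I(u)))I(u)·exp(−∫_u^t (d + νβI(z))dz) du. Then A'(t) = −(d + νβI(t))·A(t) for all t ≥ 0; in particular A(0) ≥ 0 implies A(t) ≥ 0 for all t ≥ 0. -/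

import Mathlib

theorem stmt_18 (d ν β γ τ : ℝ) (hd : 0 < d) (hν : 0 ≤ ν) (hβ : 0 < β) (hγ : 0 < γ)
    (hτ : 0 < τ)
    (S I : ℝ → ℝ) (hSc : Continuous S) (hIc : Continuous I)
    (hS : ∀ t ≥ (0:ℝ), HasDerivAt S
      (d * (1 - S t) - β * I t * S t +
        I (t - τ) * (γ + ν * β * (1 - S (t - τ) - I (t - τ))) *
          Real.exp (-d * τ - ν * β * ∫ u in (t - τ)..t, I u)) t)
    (hI : ∀ t ≥ (0:ℝ), HasDerivAt I (β * I t * S t - (γ + d) * I t) t)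
    (A : ℝ → ℝ)
    (hA : A = fun t => 1 - S t - I t -
      ∫ u in (t - τ)..t, (γ + ν * β * (1 - S u - I u)) * I u *
        Real.exp (-(∫ z in u..t, d + ν * β * I z))) :
    (∀ t ≥ (0:ℝ), HasDerivAt A (-(d + ν * β * I t) * A t) t) ∧
    (0 ≤ A 0 → ∀ t ≥ (0:ℝ), 0 ≤ A t) := by
  set g : ℝ → ℝ := fun t => d + ν * β * I t with hgdef
  have hgc : Continuous g := by continuity
  set G : ℝ → ℝ := fun t => ∫ z in (0:ℝ)..t, g z with hGdef
  have hG : ∀ t, HasDerivAt G (g t) t := fun t =>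
    intervalIntegral.integral_hasDerivAt_right (hgc.intervalIntegrable 0 t)
      (hgc.stronglyMeasurableAtFilter _ _) hgc.continuousAt
  have hGc : Continuous G := Differentiable.continuous (fun t => HasDerivAt.differentiableAt (hG t))
  have hGsub : ∀ u t : ℝ, (∫ z in u..t, (d + ν * β * I z)) = G t - G u := by
    intro u t
    rw [hGdef]
    exact (intervalIntegral.integral_interval_sub_left (hgc.intervalIntegrable 0 t)
      (hgc.intervalIntegrable 0 u)).symm
  set f : ℝ → ℝ := fun u => (γ + ν * β * (1 - S u - I u)) * I u with hfdef
  have hfc : Continuous f := ((continuous_const.add (continuous_const.mul ((continuous_const.sub hSc).sub hIc))).mul hIc)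
  set φ : ℝ → ℝ := fun u => f u * Real.exp (G u) with hφdef
  have hφc : Continuous φ := hfc.mul (Real.continuous_exp.comp hGc)
  set Φ : ℝ → ℝ := fun t => ∫ u in (0:ℝ)..t, φ u with hΦdef
  have hΦ : ∀ t, HasDerivAt Φ (φ t) t := fun t =>
    intervalIntegral.integral_hasDerivAt_right (hφc.intervalIntegrable 0 t)
      (hφc.stronglyMeasurableAtFilter _ _) hφc.continuousAt
  have hAA2 : A = fun t => 1 - S t - I t - Real.exp (-(G t)) * (Φ t - Φ (t - τ)) := by
    rw [hA]; funext t
    have h1 : (∫ u in (t - τ)..t, (γ + ν * β * (1 - S u - I u)) * I u *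
        Real.exp (-(∫ z in u..t, d + ν * β * I z)))
        = ∫ u in (t - τ)..t, Real.exp (-(G t)) * φ u := by
      apply intervalIntegral.integral_congr
      intro u hu
      simp only [hφdef, hfdef]
      rw [hGsub u t, show -(G t - G u) = G u + -(G t) by ring, Real.exp_add]
      ring
    rw [h1, intervalIntegral.integral_const_mul, hΦdef,
      intervalIntegral.integral_interval_sub_left (hφc.intervalIntegrable 0 t)
        (hφc.intervalIntegrable 0 (t - τ))]
  have hdelay : ∀ t : ℝ, (-d * τ - ν * β * ∫ u in (t - τ)..t, I u) = G (t - τ) + -(G t) := by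
    intro t
    have h1 : (∫ z in (t - τ)..t, (d + ν * β * I z)) = G t - G (t - τ) := hGsub _ _
    have h2 : (∫ z in (t - τ)..t, (d + ν * β * I z))
        = d * τ + ν * β * ∫ u in (t - τ)..t, I u := by
      rw [intervalIntegral.integral_add (g := fun z => ν * β * I z) (intervalIntegrable_const)
        ((continuous_const.mul hIc).intervalIntegrable _ _),
        intervalIntegral.integral_const, intervalIntegral.integral_const_mul]
      simp; ring
    have := h1.symm.trans h2
    linarith
  have hderiv : ∀ t ≥ (0:ℝ), HasDerivAt A (-(d + ν * β * I t) * A t) t := by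
    intro t ht
    rw [hAA2]
    have hE : HasDerivAt (fun s => Real.exp (-(G s))) (-(g t) * Real.exp (-(G t))) t := by
      have h := ((hG t).neg).exp
      exact h.congr_deriv (mul_comm (Real.exp (-(G t))) (-(g t)))
    have hshift : HasDerivAt (fun s => Φ (s - τ)) (φ (t - τ) * 1) t :=
      by have := (hΦ (t - τ)).comp t ((hasDerivAt_id t).sub_const τ); exact this
    have hH : HasDerivAt (fun s => Φ s - Φ (s - τ)) (φ t - φ (t - τ) * 1) t :=
      (hΦ t).sub hshift
    have hprod := hE.mul hH
    have hSd := hS t ht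
    have hId := hI t ht
    have hmain := (((hasDerivAt_const t (1:ℝ)).sub hSd).sub hId).sub hprod
    refine hmain.congr_deriv ?_
    rw [hdelay t, Real.exp_add]
    simp only [hφdef, hfdef, hgdef]
    rw [Real.exp_neg]
    field_simp
    ring
  refine ⟨hderiv, fun hA0 t ht => ?_⟩
  set B : ℝ → ℝ := fun s => A s * Real.exp (G s) with hBdef
  have hB : ∀ s ≥ (0:ℝ), HasDerivAt B 0 s := by
    intro s hs
    have h := (hderiv s hs).mul ((hG s).exp)
    refine h.congr_deriv ?_
    ring
  have hBconst : ∀ x ∈ Set.Icc (0:ℝ) t, B x = B 0 := by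
    apply constant_of_has_deriv_right_zero
    · intro x hx
      exact ((hB x hx.1).continuousAt).continuousWithinAt
    · intro x hx
      exact (hB x hx.1).hasDerivWithinAt
  have hBt : B t = B 0 := hBconst t ⟨ht, le_refl t⟩
  have hB0 : B 0 = A 0 := by
    simp [hBdef, hGdef]
  have hBt0 : 0 ≤ B t := by rw [hBt, hB0]; exact hA0
  have hexp := Real.exp_pos (G t)
  rw [hBdef] at hBt0
  simp only at hBt0
  nlinarith [hBt0]
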